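/- Consider pursuit-evasion in ℝⁿ with speeds bounded by a for Pursuer and b for Evader, where a > b > 0, initial positions x₀ ≠ y₀. Let θ = |y₀ - x₀|/(a - b) and define Pursuer's strategy u(t) = (y₀ - x₀)/θ + v(t), where v is Evader's control. Then (1) |u(t)| ≤ a whenever |v(t)| ≤ b, and (2) for any measurable v with |v(t)| ≤ b, the trajectories x(t) = x₀ + ∫₀ᵗ u and y(t) = y₀ + ∫₀ᵗ v satisfy x(θ) = y(θ). -/

import Mathlib

theorem stmt_6 (n : ℕ) (x₀ y₀ : EuclideanSpace ℝ (Fin n)) (a b : ℝ)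
    (hb : 0 < b) (hab : b < a) (hne : x₀ ≠ y₀)
    (θ : ℝ) (hθ : θ = ‖y₀ - x₀‖ / (a - b))
    (v : ℝ → EuclideanSpace ℝ (Fin n))
    (hv_meas : Measurable v)
    (hv : ∀ t : ℝ, ‖v t‖ ≤ b)
    (u : ℝ → EuclideanSpace ℝ (Fin n))
    (hu : ∀ t, u t = θ⁻¹ • (y₀ - x₀) + v t)
    (x y : ℝ → EuclideanSpace ℝ (Fin n))
    (hx : ∀ t, x t = x₀ + ∫ s in (0:ℝ)..t, u s)
    (hy : ∀ t, y t = y₀ + ∫ s in (0:ℝ)..t, v s) :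
    (∀ t : ℝ, ‖u t‖ ≤ a) ∧ x θ = y θ := by
  have hnorm : 0 < ‖y₀ - x₀‖ := by
    rw [norm_pos_iff, sub_ne_zero]
    exact fun h => hne h.symm
  have hab' : 0 < a - b := sub_pos.mpr hab
  have hθpos : 0 < θ := hθ ▸ div_pos hnorm hab'
  have hθne : θ ≠ 0 := ne_of_gt hθpos
  have hconst : ‖θ⁻¹ • (y₀ - x₀)‖ = a - b := by
    rw [norm_smul, norm_inv, Real.norm_eq_abs, abs_of_pos hθpos, hθ]
    field_simp
  constructor
  · intro t
    rw [hu t]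
    calc ‖θ⁻¹ • (y₀ - x₀) + v t‖ ≤ ‖θ⁻¹ • (y₀ - x₀)‖ + ‖v t‖ := norm_add_le _ _
      _ ≤ (a - b) + b := by rw [hconst]; exact add_le_add le_rfl (hv t)
      _ = a := by ring
  · have hvint : IntervalIntegrable v MeasureTheory.volume 0 θ := by
      rw [intervalIntegrable_iff]
      refine MeasureTheory.Integrable.mono' (g := fun _ => b)
        (MeasureTheory.integrableOn_const measure_Ioc_lt_top.ne)
        (hv_meas.aestronglyMeasurable) ?_
      filter_upwards with t using hv t
    have hcint : IntervalIntegrable (fun _ : ℝ => θ⁻¹ • (y₀ - x₀)) MeasureTheory.volume 0 θ :=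
      intervalIntegrable_const
    have : (∫ s in (0:ℝ)..θ, u s) = (∫ s in (0:ℝ)..θ, (θ⁻¹ • (y₀ - x₀) + v s)) := by
      apply intervalIntegral.integral_congr
      intro s _
      exact hu s
    rw [hx, hy, this, intervalIntegral.integral_add hcint hvint,
      intervalIntegral.integral_const]
    rw [sub_zero, smul_smul, mul_inv_cancel₀ hθne, one_smul]
    abel
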